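/- Dodgson's condensation rule: for any n × n matrix A = (a_{i,j}) with entries in a commutative ring and n ≥ 2, det(A) · det(A with first and last rows and columns removed) = det(A with last row and column removed) · det(A with first row and column removed) − det(A with last row and first column removed) · det(A with first row and last column removed). (For n = 2 the middle determinant, of the empty 0×0 matrix, is 1.) -/

import Mathlib

/-- Embedding of `Fin (n-1)` into `Fin n` keeping the low indices `0,…,n-2`
    (removing the last row/column). -/
def lo {n : ℕ} (i : Fin (n - 1)) : Fin n := ⟨i, by have := i.isLt; omega⟩

/-- Embedding of `Fin (n-1)` into `Fin n` keeping the high indices `1,…,n-1`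
    (removing the first row/column). -/
def hi {n : ℕ} (i : Fin (n - 1)) : Fin n := ⟨i + 1, by have := i.isLt; omega⟩

/-- Embedding of `Fin (n-2)` into `Fin n` keeping the middle indices `1,…,n-2`
    (removing the first and last rows/columns). -/
def mid {n : ℕ} (i : Fin (n - 2)) : Fin n := ⟨i + 1, by have := i.isLt; omega⟩

open Matrix

noncomputable def swapEquiv (m : ℕ) : Fin 2 ⊕ Fin m ≃ Fin (m + 2) :=
  Equiv.ofBijective
    (fun x => x.elim (fun i => if i = 0 then 0 else Fin.last (m+1))
      (fun k => ⟨k.1+1, by have := k.isLt; omega⟩))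
    (by
      rw [Fintype.bijective_iff_injective_and_card]
      refine ⟨?_, by simp [Nat.add_comm]⟩
      rintro (i|k) (j|l) h
      · fin_cases i <;> fin_cases j <;> simp only [Sum.elim_inl] at h ⊢ <;> simp [Fin.ext_iff] at h ⊢
      · have := l.isLt; fin_cases i <;> simp only [Sum.elim_inl, Sum.elim_inr] at h ⊢ <;> simp_all [Fin.ext_iff] <;> omega
      · have := k.isLt; fin_cases j <;> simp only [Sum.elim_inl, Sum.elim_inr] at h ⊢ <;> simp_all [Fin.ext_iff] <;> omega
      · have := k.isLt; have := l.isLt; simp only [Sum.elim_inr] at h ⊢; simp_all [Fin.ext_iff])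

lemma swapEquiv_inl0 (m : ℕ) : swapEquiv m (.inl 0) = 0 := rfl
lemma swapEquiv_inl1 (m : ℕ) : swapEquiv m (.inl 1) = Fin.last (m+1) := rfl
lemma swapEquiv_inr (m : ℕ) (k : Fin m) : swapEquiv m (.inr k) = mid (n := m+2) k := rfl

lemma lo_eq_castSucc (m : ℕ) : (lo : Fin (m + 2 - 1) → Fin (m+2)) = Fin.castSucc := by
  funext i; simp [lo, Fin.ext_iff]

lemma hi_eq_succ (m : ℕ) : (hi : Fin (m + 2 - 1) → Fin (m+2)) = Fin.succ := by
  funext i; simp [hi, Fin.ext_iff]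

lemma mid_ne_zero {m : ℕ} (k : Fin m) : (mid k : Fin (m+2)) ≠ 0 := by
  simp [mid, Fin.ext_iff]

lemma mid_ne_last {m : ℕ} (k : Fin m) : (mid k : Fin (m+2)) ≠ Fin.last (m+1) := by
  have := k.isLt; simp [mid, Fin.ext_iff]; omega

lemma key {R : Type*} [CommRing R] (m : ℕ) (A : Matrix (Fin (m+2)) (Fin (m+2)) R) :
    A.det * (A.det * (A.submatrix mid mid).det) =
      A.det * ((A.submatrix lo lo).det * (A.submatrix hi hi).det -
        (A.submatrix lo hi).det * (A.submatrix hi lo).det) := by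
  set B := adjugate A with hB
  set C : Matrix (Fin (m+2)) (Fin (m+2)) R :=
    fun i j => if j = 0 ∨ j = Fin.last (m+1) then B i j else if i = j then 1 else 0 with hC
  have hCij : ∀ i j, C i j = (if j = 0 ∨ j = Fin.last (m+1) then B i j else if i = j then 1 else 0) :=
    fun _ _ => rfl
  set D : Matrix (Fin 2) (Fin 2) R :=
    !![B 0 0, B 0 (Fin.last (m+1)); B (Fin.last (m+1)) 0, B (Fin.last (m+1)) (Fin.last (m+1))]
    with hD
  have hCblock : C.submatrix (swapEquiv m) (swapEquiv m) =
      fromBlocks D (0 : Matrix (Fin 2) (Fin m) R)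
        (fun (k : Fin m) (i : Fin 2) => C (mid k) (if i = 0 then 0 else Fin.last (m+1)))
        (1 : Matrix (Fin m) (Fin m) R) := by
    ext x y
    rcases x with i | k <;> rcases y with j | l
    · fin_cases i <;> fin_cases j <;>
        simp [hCij, swapEquiv_inl0, swapEquiv_inl1, fromBlocks, D]
    · have h1 := mid_ne_zero l; have h2 := mid_ne_last l
      fin_cases i <;>
        simp [hCij, swapEquiv_inl0, swapEquiv_inl1, swapEquiv_inr, fromBlocks,
          h1, h2, Ne.symm h1, Ne.symm h2]
    · fin_cases j <;> simp [hCij, swapEquiv_inl0, swapEquiv_inl1, swapEquiv_inr, fromBlocks]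
    · have h1 := mid_ne_zero l; have h2 := mid_ne_last l
      simp only [submatrix_apply, swapEquiv_inr, fromBlocks_apply₂₂, hCij]
      rw [if_neg (by tauto)]
      simp only [Matrix.one_apply, mid, Fin.mk.injEq, add_left_inj, Fin.val_inj]
      rfl
  have hmul : A * B = A.det • (1 : Matrix (Fin (m+2)) (Fin (m+2)) R) := mul_adjugate A
  have hAC : ∀ i j, (A * C) i j =
      if j = 0 ∨ j = Fin.last (m+1) then A.det * (if i = j then 1 else 0) else A i j := by
    intro i j
    by_cases h : j = 0 ∨ j = Fin.last (m+1)
    · have h1 : (A * C) i j = (A * B) i j := by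
        simp only [mul_apply, hCij, if_pos h]
      rw [h1, hmul, if_pos h]
      simp [Matrix.one_apply, smul_ite]
    · simp only [mul_apply, hCij, if_neg h, mul_ite, mul_one, mul_zero]
      rw [Finset.sum_ite_eq' Finset.univ j (fun k => A i k)]
      simp [h]
  have hACblock : (A * C).submatrix (swapEquiv m) (swapEquiv m) =
      fromBlocks (A.det • (1 : Matrix (Fin 2) (Fin 2) R))
        (fun (i : Fin 2) (l : Fin m) => (A * C) (if i = 0 then 0 else Fin.last (m+1)) (mid l))
        (0 : Matrix (Fin m) (Fin 2) R)
        (A.submatrix (mid (n := m+2)) (mid (n := m+2))) := by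
    ext x y
    rcases x with i | k <;> rcases y with j | l
    · fin_cases i <;> fin_cases j <;>
        simp [hAC, swapEquiv_inl0, swapEquiv_inl1, fromBlocks, Matrix.one_apply]
    · fin_cases i <;> simp [swapEquiv_inl0, swapEquiv_inl1, swapEquiv_inr, fromBlocks]
    · have h1 := mid_ne_zero k; have h2 := mid_ne_last k
      fin_cases j <;>
        simp [hAC, swapEquiv_inl0, swapEquiv_inl1, swapEquiv_inr, fromBlocks,
          h1, h2, Ne.symm h1, Ne.symm h2]
    · have h1 := mid_ne_zero l; have h2 := mid_ne_last l
      simp only [submatrix_apply, swapEquiv_inr, fromBlocks_apply₂₂]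
      rw [hAC, if_neg (by tauto)]
      rfl
  have hdetC : C.det = D.det := by
    rw [← det_submatrix_equiv_self (swapEquiv m), hCblock]
    erw [det_fromBlocks_zero₁₂]
    simp
  have hdetAC : (A * C).det = A.det ^ 2 * (A.submatrix mid mid).det := by
    rw [← det_submatrix_equiv_self (swapEquiv m), hACblock]
    erw [det_fromBlocks_zero₂₁]
    rw [
      det_smul, det_one]
    ring_nf
    rfl
  have hz : ((0 : Fin (m+2)).succAbove : Fin (m+1) → Fin (m+2)) = (hi (n := m+2)) := by
    funext i; rw [Fin.zero_succAbove, hi_eq_succ]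
  have hl : ((Fin.last (m+1)).succAbove : Fin (m+1) → Fin (m+2)) = (lo (n := m+2)) := by
    funext i; rw [Fin.succAbove_last, lo_eq_castSucc]
  have e00 : B 0 0 = (A.submatrix hi hi).det := by
    rw [hB, adjugate_fin_succ_eq_det_submatrix, hz]
    simp
  have ell : B (Fin.last (m+1)) (Fin.last (m+1)) = (A.submatrix lo lo).det := by
    rw [hB, adjugate_fin_succ_eq_det_submatrix, hl]
    simp
  have e0l : B 0 (Fin.last (m+1)) = (-1)^(m+1) * (A.submatrix lo hi).det := by
    rw [hB, adjugate_fin_succ_eq_det_submatrix, hz, hl]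
    simp
  have el0 : B (Fin.last (m+1)) 0 = (-1)^(m+1) * (A.submatrix hi lo).det := by
    rw [hB, adjugate_fin_succ_eq_det_submatrix, hz, hl]
    simp
  have hsq : ((-1:R)^(m+1)) * ((-1:R)^(m+1)) = 1 := by
    rw [← pow_add]
    exact Even.neg_one_pow ⟨m+1, rfl⟩
  have hdetD : D.det = (A.submatrix lo lo).det * (A.submatrix hi hi).det -
      (A.submatrix lo hi).det * (A.submatrix hi lo).det := by
    rw [hD, det_fin_two_of, e00, ell, e0l, el0]
    linear_combination (-((A.submatrix lo hi).det * (A.submatrix hi lo).det)) * hsq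
  have hfin : A.det * C.det = A.det ^ 2 * (A.submatrix mid mid).det := by
    rw [← det_mul, hdetAC]
  rw [← hdetD, ← hdetC]
  linear_combination -hfin


noncomputable def genM (m : ℕ) :
    Matrix (Fin (m+2)) (Fin (m+2)) (MvPolynomial (Fin (m+2) × Fin (m+2)) ℤ) :=
  fun i j => MvPolynomial.X (i, j)

lemma genM_det_ne_zero (m : ℕ) : (genM m).det ≠ 0 := by
  intro h
  have h2 := congrArg (MvPolynomial.eval (fun p : Fin (m+2) × Fin (m+2) =>
    if p.1 = p.2 then (1:ℤ) else 0)) h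
  rw [RingHom.map_det, RingHom.mapMatrix_apply, map_zero] at h2
  have h3 : (genM m).map (MvPolynomial.eval (fun p : Fin (m+2) × Fin (m+2) =>
      if p.1 = p.2 then (1:ℤ) else 0)) = (1 : Matrix (Fin (m+2)) (Fin (m+2)) ℤ) := by
    ext i j
    simp [genM, Matrix.one_apply]
  rw [h3, det_one] at h2
  exact one_ne_zero h2

lemma genM_dodgson (m : ℕ) :
    (genM m).det * ((genM m).submatrix mid mid).det =
      ((genM m).submatrix lo lo).det * ((genM m).submatrix hi hi).det -
        ((genM m).submatrix lo hi).det * ((genM m).submatrix hi lo).det :=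
  mul_left_cancel₀ (genM_det_ne_zero m) (key m (genM m))


/-- Dodgson's condensation rule. -/
theorem dodgson_condensation {R : Type*} [CommRing R] {n : ℕ} (hn : 2 ≤ n)
    (A : Matrix (Fin n) (Fin n) R) :
    A.det * (A.submatrix mid mid).det =
      (A.submatrix lo lo).det * (A.submatrix hi hi).det -
        (A.submatrix lo hi).det * (A.submatrix hi lo).det := by
  obtain ⟨m, rfl⟩ : ∃ m, n = m + 2 := ⟨n - 2, by omega⟩
  set φ : MvPolynomial (Fin (m+2) × Fin (m+2)) ℤ →+* R :=
    (MvPolynomial.eval₂Hom (Int.castRingHom R) (fun p => A p.1 p.2)) with hφ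
  have hsub : ∀ (k l : ℕ) (f : Fin k → Fin (m+2)) (g : Fin l → Fin (m+2)),
      (((genM m).submatrix f g).map φ) = A.submatrix f g := by
    intro k l f g
    ext i j
    simp [genM, hφ]
  have hA : ((genM m).map φ) = A := by
    ext i j; simp [genM, hφ]
  have h := congrArg φ (genM_dodgson m)
  simp only [_root_.map_mul, map_sub, RingHom.map_det, RingHom.mapMatrix_apply] at h
  rw [show ((genM m).submatrix mid mid).map φ = A.submatrix mid mid from hsub _ _ _ _,
    show ((genM m).submatrix lo lo).map φ = A.submatrix lo lo from hsub _ _ _ _,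
    show ((genM m).submatrix hi hi).map φ = A.submatrix hi hi from hsub _ _ _ _,
    show ((genM m).submatrix lo hi).map φ = A.submatrix lo hi from hsub _ _ _ _,
    show ((genM m).submatrix hi lo).map φ = A.submatrix hi lo from hsub _ _ _ _,
    hA] at h
  exact h
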